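/- Let k have characteristic ≠ 2, let V = V₁ ⊕ V₂ with dim V₁ = dim V₂ = d, and let Ψ be a nondegenerate bilinear form on V with Ψ(u,v) = (-1)^κ Ψ(v,u) where d + κ is even, such that V₁, V₂ are totally isotropic and are dually paired by bases v₁,…,v_d of V₁ and v'₁,…,v'_d of V₂ with Ψ(v_i, v'_j) = (-1)^{i-1} δ_{i,d+1-j}. Let e be the nilpotent endomorphism sending v_i ↦ v_{i+1}, v'_i ↦ v'_{i+1} (indices > d map to 0). Then the endomorphism z defined by z(v_i) = v_{i+1} + v'_{i+2}, z(v'_i) = v'_{i+1} + v_i is skew-adjoint with respect to Ψ, commutes with e, and satisfies z^d ≠ 0, z^{d+1} = 0. -/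

import Mathlib

/-- The skew-adjoint nilpotent endomorphism `z` commuting with a pair of
dually-paired Jordan blocks of even "type" `d + κ`, with `z(v_i)=v_{i+1}+v'_{i+2}`,
`z(v'_i)=v'_{i+1}+v_i`, satisfies `z^d ≠ 0` and `z^{d+1} = 0`.
Indexing is zero-based: `v 0, …, v (d-1)` is the basis, `v i = 0` for `i ≥ d`. -/
theorem stmt8 (k : Type*) [Field k] (h2 : (2 : k) ≠ 0)
    (V : Type*) [AddCommGroup V] [Module k V]
    (d : ℕ) (hd : 0 < d) (κ : ℕ) (hκ : Even (d + κ))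
    (Ψ : V →ₗ[k] V →ₗ[k] k)
    (hnd : ∀ u : V, (∀ w : V, Ψ u w = 0) → u = 0)
    (hsymm : ∀ u w : V, Ψ u w = (-1 : k) ^ κ * Ψ w u)
    (v v' : ℕ → V)
    (hv0 : ∀ i, d ≤ i → v i = 0) (hv'0 : ∀ i, d ≤ i → v' i = 0)
    (b : Module.Basis (Fin d ⊕ Fin d) k V)
    (hb : ∀ i : Fin d, b (Sum.inl i) = v i ∧ b (Sum.inr i) = v' i)
    (hiso1 : ∀ i j, i < d → j < d → Ψ (v i) (v j) = 0)
    (hiso2 : ∀ i j, i < d → j < d → Ψ (v' i) (v' j) = 0)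
    (hpair : ∀ i j, i < d → j < d →
      Ψ (v i) (v' j) = if i + j + 1 = d then (-1 : k) ^ i else 0)
    (e : Module.End k V)
    (hev : ∀ i, e (v i) = v (i + 1)) (hev' : ∀ i, e (v' i) = v' (i + 1))
    (z : Module.End k V)
    (hzv : ∀ i, z (v i) = v (i + 1) + v' (i + 2))
    (hzv' : ∀ i, z (v' i) = v' (i + 1) + v i) :
    (∀ u w : V, Ψ (z u) w + Ψ u (z w) = 0) ∧
    z * e = e * z ∧ z ^ d ≠ 0 ∧ z ^ (d + 1) = 0 := by
  -- pairing helpers valid for all natural indices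
  have hP : ∀ i j : ℕ, Ψ (v i) (v' j) = if i + j + 1 = d then (-1 : k) ^ i else 0 := by
    intro i j
    by_cases hi : i < d
    · by_cases hj : j < d
      · exact hpair i j hi hj
      · rw [hv'0 j (not_lt.1 hj), map_zero, if_neg (by omega)]
    · rw [hv0 i (not_lt.1 hi), map_zero, LinearMap.zero_apply, if_neg (by omega)]
  have hPvv : ∀ i j : ℕ, Ψ (v i) (v j) = 0 := by
    intro i j
    by_cases hi : i < d
    · by_cases hj : j < d
      · exact hiso1 i j hi hj
      · rw [hv0 j (not_lt.1 hj), map_zero]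
    · rw [hv0 i (not_lt.1 hi), map_zero, LinearMap.zero_apply]
  have hPv'v' : ∀ i j : ℕ, Ψ (v' i) (v' j) = 0 := by
    intro i j
    by_cases hi : i < d
    · by_cases hj : j < d
      · exact hiso2 i j hi hj
      · rw [hv'0 j (not_lt.1 hj), map_zero]
    · rw [hv'0 i (not_lt.1 hi), map_zero, LinearMap.zero_apply]
  have hP' : ∀ i j : ℕ, Ψ (v' i) (v j)
      = (-1 : k) ^ κ * (if j + i + 1 = d then (-1 : k) ^ j else 0) := by
    intro i j; rw [hsymm (v' i) (v j), hP]
  -- sign lemma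
  have hpm : ∀ i j : ℕ, Even (i + j + 1 + d) →
      (-1 : k) ^ κ * (-1 : k) ^ j + (-1 : k) ^ i = 0 := by
    intro i j hij
    have h1 : (-1 : k) ^ κ * (-1 : k) ^ j = (-1 : k) ^ (κ + j) := (pow_add _ _ _).symm
    rw [h1]
    rw [Nat.even_iff] at hκ hij
    rcases Nat.even_or_odd (κ + j) with he | ho
    · have hio : Odd i := by
        rw [Nat.even_iff] at he; rw [Nat.odd_iff]; omega
      rw [he.neg_one_pow, hio.neg_one_pow]; ring
    · have hie : Even i := by
        rw [Nat.odd_iff] at ho; rw [Nat.even_iff]; omega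
      rw [ho.neg_one_pow, hie.neg_one_pow]; ring
  -- skew-adjointness
  have skew : ∀ u w : V, Ψ (z u) w + Ψ u (z w) = 0 := by
    have key : (Ψ.comp z + Ψ.compl₂ z) = 0 := by
      refine b.ext fun i => ?_
      refine b.ext fun j => ?_
      simp only [LinearMap.add_apply, LinearMap.comp_apply, LinearMap.compl₂_apply,
        LinearMap.zero_apply]
      rcases i with i | i <;> rcases j with j | j
      · rw [(hb i).1, (hb j).1, hzv, hzv, map_add, LinearMap.add_apply, map_add,
          hPvv, hPvv, hP', hP]
        rcases eq_or_ne ((i : ℕ) + (j : ℕ) + 3) d with h | h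
        · rw [if_pos (by omega), if_pos (by omega)]
          have := hpm (i : ℕ) j ⟨i + j + 2, by omega⟩
          linear_combination this
        · rw [if_neg (by omega), if_neg (by omega)]; ring
      · rw [(hb i).1, (hb j).2, hzv, hzv', map_add, LinearMap.add_apply, map_add,
          hP, hPv'v', hP, hPvv]
        rcases eq_or_ne ((i : ℕ) + j + 2) d with h | h
        · rw [if_pos (by omega), if_pos (by omega), pow_succ]; ring
        · rw [if_neg (by omega), if_neg (by omega)]; ring
      · rw [(hb i).2, (hb j).1, hzv', hzv, map_add, LinearMap.add_apply, map_add,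
          hP', hPvv, hP', hPv'v']
        rcases eq_or_ne ((i : ℕ) + j + 2) d with h | h
        · rw [if_pos (by omega), if_pos (by omega), pow_succ]; ring
        · rw [if_neg (by omega), if_neg (by omega)]; ring
      · rw [(hb i).2, (hb j).2, hzv', hzv', map_add, LinearMap.add_apply, map_add,
          hPv'v', hP, hPv'v', hP']
        rcases eq_or_ne ((i : ℕ) + j + 1) d with h | h
        · rw [if_pos (by omega), if_pos (by omega)]
          have := hpm (i : ℕ) j ⟨i + j + 1, by omega⟩
          linear_combination this
        · rw [if_neg (by omega), if_neg (by omega)]; ring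
    intro u w
    have := DFunLike.congr_fun (DFunLike.congr_fun key u) w
    simpa using this
  -- commutation
  have hcomm : z * e = e * z := by
    refine b.ext fun i => ?_
    rcases i with i | i
    · rw [(hb i).1]
      show z (e (v i)) = e (z (v i))
      rw [hev, hzv, hzv, map_add, hev, hev']
    · rw [(hb i).2]
      show z (e (v' i)) = e (z (v' i))
      rw [hev', hzv', hzv', map_add, hev', hev]
  -- iterated powers of z
  have pow_lemma : ∀ n : ℕ,
      (∀ i, (z ^ (n + 1)) (v i) = (2 : k) ^ n • (v (i + n + 1) + v' (i + n + 2))) ∧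
      (∀ i, (z ^ (n + 1)) (v' i) = (2 : k) ^ n • (v (i + n) + v' (i + n + 1))) := by
    intro n
    induction n with
    | zero =>
      constructor <;> intro i
      · simp [pow_one, hzv]
      · simp [pow_one, hzv', add_comm]
    | succ n ih =>
      obtain ⟨ih1, ih2⟩ := ih
      have hps : z ^ (n + 2) = z ^ (n + 1) * z := pow_succ z (n + 1)
      constructor <;> intro i
      · rw [hps, Module.End.mul_apply, hzv, map_add, ih1, ih2,
          show (i : ℕ) + 1 + n + 2 = i + (n + 1) + 2 from by omega,
          show (i : ℕ) + 1 + n + 1 = i + (n + 1) + 1 from by omega,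
          show (i : ℕ) + 2 + n + 1 = i + (n + 1) + 2 from by omega,
          show (i : ℕ) + 2 + n = i + (n + 1) + 1 from by omega,
          ← add_smul]
        congr 1
        ring
      · rw [hps, Module.End.mul_apply, hzv', map_add, ih2, ih1,
          show (i : ℕ) + 1 + n + 1 = i + (n + 1) + 1 from by omega,
          show (i : ℕ) + 1 + n = i + (n + 1) from by omega,
          show (i : ℕ) + n + 2 = i + (n + 1) + 1 from by omega,
          show (i : ℕ) + n + 1 = i + (n + 1) from by omega,
          ← add_smul]
        congr 1
        ring
  refine ⟨skew, hcomm, ?_, ?_⟩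
  · -- z ^ d ≠ 0
    intro h
    obtain ⟨m, rfl⟩ : ∃ m, d = m + 1 := ⟨d - 1, by omega⟩
    have h0 : (z ^ (m + 1)) (v' 0) = 0 := by rw [h]; rfl
    rw [(pow_lemma m).2 0, hv'0 (0 + m + 1) (by omega), add_zero] at h0
    have hv_ne : v (0 + m) ≠ 0 := by
      rw [show (0 : ℕ) + m = m from by omega, ← (hb ⟨m, by omega⟩).1]
      exact b.ne_zero _
    exact hv_ne ((smul_eq_zero.1 h0).resolve_left (pow_ne_zero _ h2))
  · -- z ^ (d + 1) = 0
    refine b.ext fun i => ?_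
    rcases i with i | i
    · rw [(hb i).1]
      show (z ^ (d + 1)) (v i) = (0 : Module.End k V) (v i)
      rw [(pow_lemma d).1 i, hv0 _ (by omega), hv'0 _ (by omega)]
      simp
    · rw [(hb i).2]
      show (z ^ (d + 1)) (v' i) = (0 : Module.End k V) (v' i)
      rw [(pow_lemma d).2 i, hv0 _ (by omega), hv'0 _ (by omega)]
      simp
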